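/- Let a < b be real numbers, let G : [a,b] → ℝ be nondecreasing and right-continuous, and let f : [a,b] → ℝ. Suppose that f is Henstock–Kurzweil–Stieltjes integrable with respect to G on [a, y] for every y ∈ (a,b), and that A := lim_{y↗b} ∫ₐʸ f dG exists in ℝ. Then f is Henstock–Kurzweil–Stieltjes integrable with respect to G on [a,b] and ∫ₐᵇ f dG = A + f(b)·(G(b) − G(b⁻)), where G(b⁻) = lim_{y↗b} G(y). -/

import Mathlib

open Filter Topology

/-- `f` is Henstock–Kurzweil–Stieltjes integrable with respect to `G` on `[a,b]`
with value `I`: for every `ε > 0` there is a gauge `δ : ℝ → (0,∞)` such that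
every `δ`-fine tagged partition of `[a,b]` has Riemann–Stieltjes sum within `ε`
of `I`. -/
def IsHKSIntegral (f G : ℝ → ℝ) (a b I : ℝ) : Prop :=
  ∀ ε : ℝ, 0 < ε → ∃ δ : ℝ → ℝ, (∀ t : ℝ, 0 < δ t) ∧
    ∀ (n : ℕ) (x : Fin (n + 1) → ℝ) (t : Fin n → ℝ),
      Monotone x → x 0 = a → x (Fin.last n) = b →
      (∀ i : Fin n, t i ∈ Set.Icc (x i.castSucc) (x i.succ)) →
      (∀ i : Fin n, Set.Icc (x i.castSucc) (x i.succ) ⊆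
        Set.Ioo (t i - δ (t i)) (t i + δ (t i))) →
      |(∑ i : Fin n, f (t i) * (G (x i.succ) - G (x i.castSucc))) - I| < ε

namespace Hake1

inductive Fine (f G δ : ℝ → ℝ) : ℝ → ℝ → ℝ → Prop
  | refl (a : ℝ) : Fine f G δ a a 0
  | snoc {a u v t s} : Fine f G δ a u s → a ≤ u → t ∈ Set.Icc u v →
      Set.Icc u v ⊆ Set.Ioo (t - δ t) (t + δ t) →
      Fine f G δ a v (s + f t * (G v - G u))

variable {f G δ δ' : ℝ → ℝ} {a b c s s' : ℝ}

lemma Fine.le (h : Fine f G δ a b s) : a ≤ b := by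
  induction h with
  | refl => exact le_refl _
  | @snoc u v t s h hau ht hsub ih => exact hau.trans (ht.1.trans ht.2)

lemma Fine.mono_on (h : Fine f G δ a b s) (hd : ∀ t ∈ Set.Icc a b, δ t ≤ δ' t) :
    Fine f G δ' a b s := by
  induction h with
  | refl => exact Fine.refl _
  | @snoc u v t s h hau ht hsub ih =>
    have huv : u ≤ v := ht.1.trans ht.2
    refine Fine.snoc (ih fun r hr => hd r ⟨hr.1, hr.2.trans huv⟩) hau ht ?_
    intro r hr
    have h1 := hsub hr
    have h2 : δ t ≤ δ' t := hd t ⟨hau.trans ht.1, ht.2⟩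
    exact ⟨lt_of_le_of_lt (by linarith [h1.1]) h1.1, lt_of_lt_of_le h1.2 (by linarith)⟩

lemma Fine.append (h : Fine f G δ a b s) (h' : Fine f G δ b c s') :
    Fine f G δ a c (s + s') := by
  induction h' with
  | refl => simpa using h
  | @snoc u v t s0 h0 hau ht hsub ih =>
    have := Fine.snoc ih (h.le.trans hau) ht hsub
    convert this using 1; ring

lemma Fine.self_eq_zero (h : Fine f G δ a b s) (hba : b ≤ a) : s = 0 := by
  induction h with
  | refl => rfl
  | @snoc u v t s0 h0 hau ht hsub ih =>
    have h0a : a ≤ u := hau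
    have huv : u ≤ v := ht.1.trans ht.2
    have huv' : u = v := le_antisymm huv (by linarith)
    rw [ih (by linarith), huv']
    simp

lemma Fine.toFin (h : Fine f G δ a b s) :
    ∃ (n : ℕ) (x : Fin (n + 1) → ℝ) (t : Fin n → ℝ),
      Monotone x ∧ x 0 = a ∧ x (Fin.last n) = b ∧
      (∀ i : Fin n, t i ∈ Set.Icc (x i.castSucc) (x i.succ)) ∧
      (∀ i : Fin n, Set.Icc (x i.castSucc) (x i.succ) ⊆
        Set.Ioo (t i - δ (t i)) (t i + δ (t i))) ∧
      (∑ i : Fin n, f (t i) * (G (x i.succ) - G (x i.castSucc))) = s := by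
  induction h with
  | refl =>
    exact ⟨0, fun _ => a, Fin.elim0, monotone_const, rfl, rfl,
      fun i => i.elim0, fun i => i.elim0, by simp⟩
  | @snoc u v tg s0 h0 hau ht hsub ih =>
    obtain ⟨n, x, t, hmono, hx0, hxl, htag, hfine, hsum⟩ := ih
    refine ⟨n + 1, Fin.snoc x v, Fin.snoc t tg, ?_, ?_, ?_, ?_, ?_, ?_⟩
    · rw [Fin.monotone_iff_le_succ]
      intro i
      refine Fin.lastCases ?_ ?_ i
      · rw [Fin.snoc_castSucc, Fin.succ_last, Fin.snoc_last, hxl]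
        exact ht.1.trans ht.2
      · intro j
        rw [Fin.snoc_castSucc, Fin.succ_castSucc, Fin.snoc_castSucc]
        exact hmono (Fin.castSucc_le_succ j)
    · rw [show (0 : Fin (n+2)) = Fin.castSucc 0 by rfl, Fin.snoc_castSucc]; exact hx0
    · rw [Fin.snoc_last]
    · intro i
      refine Fin.lastCases ?_ ?_ i
      · rw [Fin.snoc_last, Fin.succ_last, Fin.snoc_last, Fin.snoc_castSucc, hxl]
        exact ht
      · intro j
        rw [Fin.snoc_castSucc, Fin.succ_castSucc, Fin.snoc_castSucc, Fin.snoc_castSucc]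
        exact htag j
    · intro i
      refine Fin.lastCases ?_ ?_ i
      · rw [Fin.snoc_last, Fin.succ_last, Fin.snoc_last, Fin.snoc_castSucc, hxl]
        exact hsub
      · intro j
        rw [Fin.snoc_castSucc, Fin.succ_castSucc, Fin.snoc_castSucc, Fin.snoc_castSucc]
        exact hfine j
    · rw [Fin.sum_univ_castSucc]
      simp only [Fin.snoc_castSucc, Fin.succ_castSucc, Fin.snoc_last, Fin.succ_last]
      rw [hxl, hsum]

lemma Fine.ofFin : ∀ (n : ℕ) (x : Fin (n + 1) → ℝ) (t : Fin n → ℝ),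
      Monotone x →
      (∀ i : Fin n, t i ∈ Set.Icc (x i.castSucc) (x i.succ)) →
      (∀ i : Fin n, Set.Icc (x i.castSucc) (x i.succ) ⊆
        Set.Ioo (t i - δ (t i)) (t i + δ (t i))) →
      Fine f G δ (x 0) (x (Fin.last n))
        (∑ i : Fin n, f (t i) * (G (x i.succ) - G (x i.castSucc))) := by
  intro n
  induction n with
  | zero =>
    intro x t _ _ _
    simpa using Fine.refl (f := f) (G := G) (δ := δ) (x 0)
  | succ n ih =>
    intro x t hmono htag hfine
    have h0 := ih (x ∘ Fin.castSucc) (t ∘ Fin.castSucc)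
      (hmono.comp (fun i j hij => by exact hij : Monotone (Fin.castSucc : Fin (n+1) → Fin (n+2))))
      (fun j => by simpa using htag j.castSucc)
      (fun j => by simpa using hfine j.castSucc)
    rw [Fin.sum_univ_castSucc]
    simp only [Function.comp] at h0
    have step := Fine.snoc (v := x (Fin.last (n+1))) (t := t (Fin.last n)) h0
      (hmono (Fin.zero_le _))
      (by simpa [Fin.succ_last] using htag (Fin.last n))
      (by simpa [Fin.succ_last] using hfine (Fin.last n))
    simpa [Fin.succ_last] using step

lemma cousin (hδ : ∀ t, 0 < δ t) (hab : a ≤ b) : ∃ s, Fine f G δ a b s := by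
  set S : Set ℝ := {x | x ∈ Set.Icc a b ∧ ∃ s, Fine f G δ a x s} with hS
  have haS : a ∈ S := ⟨⟨le_refl a, hab⟩, 0, Fine.refl a⟩
  have hne : S.Nonempty := ⟨a, haS⟩
  have hbdd : BddAbove S := ⟨b, fun x hx => hx.1.2⟩
  set c := sSup S with hc
  have hac : a ≤ c := le_csSup hbdd haS
  have hcb : c ≤ b := csSup_le hne (fun x hx => hx.1.2)
  have hcS : c ∈ S := by
    obtain ⟨x, hxS, hxc⟩ := exists_lt_of_lt_csSup hne (show c - δ c < c by linarith [hδ c])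
    have hxc' : x ≤ c := le_csSup hbdd hxS
    obtain ⟨s, hs⟩ := hxS.2
    refine ⟨⟨hac, hcb⟩, s + f c * (G c - G x), Fine.snoc hs hs.le ⟨hxc', le_refl c⟩ ?_⟩
    intro r hr
    exact ⟨lt_of_lt_of_le hxc hr.1, lt_of_le_of_lt hr.2 (by linarith [hδ c])⟩
  rcases eq_or_lt_of_le hcb with h | h
  · obtain ⟨s, hs⟩ := hcS.2
    exact ⟨s, h ▸ hs⟩
  · exfalso
    set d := min b (c + δ c / 2) with hd
    have hcd : c < d := lt_min h (by linarith [hδ c])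
    obtain ⟨s, hs⟩ := hcS.2
    have hdS : d ∈ S := by
      refine ⟨⟨hac.trans hcd.le, min_le_left _ _⟩,
        s + f c * (G d - G c), Fine.snoc hs hs.le ⟨le_refl c, hcd.le⟩ ?_⟩
      intro r hr
      refine ⟨lt_of_lt_of_le (by linarith [hδ c]) hr.1, lt_of_le_of_lt hr.2 ?_⟩
      calc d ≤ c + δ c / 2 := min_le_right _ _
        _ < c + δ c := by linarith [hδ c]
    exact absurd (le_csSup hbdd hdS) (not_le.mpr hcd)

lemma Fine.split (h : Fine f G δ a b s) :
    ∀ w ∈ Set.Icc a b, (∀ t ∈ Set.Icc a b, w ∈ Set.Ioo (t - δ t) (t + δ t) → t = w) →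
    ∃ s₁ s₂, s = s₁ + s₂ ∧ Fine f G δ a w s₁ ∧ Fine f G δ w b s₂ := by
  induction h with
  | refl =>
    intro w hw _
    have : w = a := le_antisymm hw.2 hw.1
    subst this
    exact ⟨0, 0, by ring, Fine.refl _, Fine.refl _⟩
  | @snoc u v tg s0 h0 hau ht hsub ih =>
    intro w hw hyp
    have huv : u ≤ v := ht.1.trans ht.2
    rcases le_or_gt w u with hwu | huw
    · obtain ⟨s₁, s₂, heq, hf1, hf2⟩ := ih w ⟨hw.1, hwu⟩
        (fun r hr hio => hyp r ⟨hr.1, hr.2.trans huv⟩ hio)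
      refine ⟨s₁, s₂ + f tg * (G v - G u), by rw [heq]; ring, hf1,
        Fine.snoc hf2 hwu ht hsub⟩
    · rcases eq_or_lt_of_le hw.2 with hwv | hwv
      · refine ⟨s0 + f tg * (G v - G u), 0, by ring, ?_, ?_⟩
        · rw [hwv]; exact Fine.snoc h0 hau ht hsub
        · rw [hwv]; exact Fine.refl _
      · have htw : tg = w :=
          hyp tg ⟨hau.trans ht.1, ht.2⟩ (hsub ⟨huw.le, hwv.le⟩)
        subst htw
        refine ⟨s0 + f tg * (G tg - G u), 0 + f tg * (G v - G tg), by ring, ?_, ?_⟩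
        · exact Fine.snoc h0 hau ⟨ht.1, le_refl tg⟩
            (fun r hr => hsub ⟨hr.1, hr.2.trans hwv.le⟩)
        · exact Fine.snoc (Fine.refl tg) (le_refl tg) ⟨le_refl tg, hwv.le⟩
            (fun r hr => hsub ⟨huw.le.trans hr.1, hr.2⟩)

lemma Fine.peel (h : Fine f G δ a b s) (hab : a < b)
    (hyp : ∀ t ∈ Set.Icc a b, t < b → t + δ t ≤ b) :
    ∃ c s₁, a ≤ c ∧ c < b ∧ b - δ b < c ∧ s = s₁ + f b * (G b - G c) ∧
      Fine f G δ a c s₁ := by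
  induction h with
  | refl => exact absurd hab (lt_irrefl a)
  | @snoc u v tg s0 h0 hau ht hsub ih =>
    have huv : u ≤ v := ht.1.trans ht.2
    have hio := hsub ⟨ht.1, ht.2⟩
    have htv : tg = v := by
      by_contra hne
      have h1 : tg < v := lt_of_le_of_ne ht.2 hne
      have h2 := hyp tg ⟨hau.trans ht.1, ht.2⟩ h1
      have h3 := (hsub ⟨huv, le_refl v⟩).2
      linarith
    subst htv
    rcases eq_or_lt_of_le huv with rfl | huv'
    · obtain ⟨c, s₁, h1, h2, h3, h4, h5⟩ := ih hab
        (fun r hr hrb => hyp r hr hrb)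
      refine ⟨c, s₁, h1, h2, h3, ?_, h5⟩
      rw [h4]; ring
    · have h3 := (hsub ⟨le_refl u, huv⟩)
      exact ⟨u, s0, hau, huv', by linarith [h3.1], rfl, h0⟩

lemma isHKS_fine {p q I : ℝ} (h : IsHKSIntegral f G p q I) {ε : ℝ} (hε : 0 < ε) :
    ∃ δ : ℝ → ℝ, (∀ t, 0 < δ t) ∧ ∀ s, Fine f G δ p q s → |s - I| < ε := by
  obtain ⟨δ, hpos, hδ⟩ := h ε hε
  refine ⟨δ, hpos, fun s hs => ?_⟩
  obtain ⟨n, x, t, hmono, hx0, hxl, htag, hfine, hsum⟩ := hs.toFin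
  rw [← hsum]
  exact hδ n x t hmono hx0 hxl htag hfine

/-- `H F a z` : the indefinite integral, `0` at `a`. -/
noncomputable def Hf (F : ℝ → ℝ) (a z : ℝ) : ℝ := if z ≤ a then 0 else F z

section Sub
variable {F : ℝ → ℝ} {a b : ℝ}
variable (hF : ∀ y ∈ Set.Ioo a b, IsHKSIntegral f G a y (F y))

include hF in
lemma L6 {u v : ℝ} (hau : a ≤ u) (huv : u ≤ v) (hvb : v < b)
    {ε : ℝ} (hε : 0 < ε) :
    ∃ δ : ℝ → ℝ, (∀ t, 0 < δ t) ∧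
      ∀ s, Fine f G δ u v s → |s - (Hf F a v - Hf F a u)| < ε := by
  rcases le_or_gt v a with hva | hav
  · refine ⟨fun _ => 1, fun _ => one_pos, fun s hs => ?_⟩
    have huv' : u = v := le_antisymm huv (hva.trans hau)
    have : s = 0 := hs.self_eq_zero huv'.ge
    simp [this, Hf, hva, le_antisymm (huv'.le.trans hva) hau, hva.trans hau, hε]
  · have hvmem : v ∈ Set.Ioo a b := ⟨hav, hvb⟩
    rcases le_or_gt u a with hua | hau'
    · have hua' : u = a := le_antisymm hua hau
      subst hua'
      obtain ⟨δ, hpos, hδ⟩ := isHKS_fine (hF v hvmem) hε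
      refine ⟨δ, hpos, fun s hs => ?_⟩
      have := hδ s hs
      simpa [Hf, le_refl, not_le.mpr hav] using this
    · obtain ⟨δu, hposu, hδu⟩ := isHKS_fine (hF u ⟨hau', huv.trans_lt hvb⟩) (half_pos hε)
      obtain ⟨δv, hposv, hδv⟩ := isHKS_fine (hF v hvmem) (half_pos hε)
      refine ⟨fun t => min (δu t) (δv t), fun t => lt_min (hposu t) (hposv t),
        fun s hs => ?_⟩
      obtain ⟨s₀, hs₀⟩ := cousin (δ := fun t => min (δu t) (δv t))
        (fun t => lt_min (hposu t) (hposv t)) hau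
      have h1 : |s₀ - F u| < ε / 2 :=
        hδu s₀ (hs₀.mono_on fun t _ => min_le_left _ _)
      have h2 : |s₀ + s - F v| < ε / 2 :=
        hδv _ ((hs₀.append hs).mono_on fun t _ => min_le_right _ _)
      have : |s - (Hf F a v - Hf F a u)| = |s - (F v - F u)| := by
        rw [Hf, Hf, if_neg (not_le.mpr hav), if_neg (not_le.mpr hau')]
      rw [this]
      have : s - (F v - F u) = (s₀ + s - F v) - (s₀ - F u) := by ring
      rw [this]
      calc |(s₀ + s - F v) - (s₀ - F u)| ≤ |s₀ + s - F v| + |s₀ - F u| := abs_sub _ _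
        _ < ε / 2 + ε / 2 := add_lt_add h2 h1
        _ = ε := add_halves ε

include hF in
lemma L7 {u w : ℝ} (hau : a ≤ u) (huw : u ≤ w) (hwb : w < b)
    {ε : ℝ} (hε : 0 < ε) :
    ∃ δ : ℝ → ℝ, (∀ t, 0 < δ t) ∧
      ∀ c ∈ Set.Icc u w, ∀ s, Fine f G δ u c s →
        |s - (Hf F a c - Hf F a u)| < ε := by
  have hε3 : 0 < ε / 3 := by linarith
  obtain ⟨δ₀, hpos₀, hδ₀⟩ := L6 (f := f) (G := G) hF hau huw hwb hε3
  refine ⟨δ₀, hpos₀, fun c hc s hs => ?_⟩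
  obtain ⟨δ₁, hpos₁, hδ₁⟩ := L6 (f := f) (G := G) hF (hau.trans hc.1) hc.2 hwb hε3
  obtain ⟨s', hs'⟩ := cousin (δ := fun t => min (δ₀ t) (δ₁ t))
    (fun t => lt_min (hpos₀ t) (hpos₁ t)) hc.2
  have h1 : |s' - (Hf F a w - Hf F a c)| < ε / 3 :=
    hδ₁ s' (hs'.mono_on fun t _ => min_le_right _ _)
  have h2 : |s + s' - (Hf F a w - Hf F a u)| < ε / 3 :=
    hδ₀ _ (hs.append (hs'.mono_on fun t _ => min_le_left _ _))
  have : s - (Hf F a c - Hf F a u) =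
      (s + s' - (Hf F a w - Hf F a u)) - (s' - (Hf F a w - Hf F a c)) := by ring
  rw [this]
  calc |_ - _| ≤ |s + s' - (Hf F a w - Hf F a u)| + |s' - (Hf F a w - Hf F a c)| :=
        abs_sub _ _
    _ < ε / 3 + ε / 3 := add_lt_add h2 h1
    _ < ε := by linarith

end Sub

lemma aux_fb (B ε : ℝ) (hB : 0 ≤ B) (hε : 0 < ε) :
    B * (ε / (4 * (B + 1))) ≤ ε / 4 := by
  rw [mul_div_assoc', div_le_div_iff₀ (by positivity) (by norm_num : (0:ℝ) < 4)]
  nlinarith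

section Main
variable {F : ℝ → ℝ} {a b A Gb' : ℝ}

theorem main (hab : a < b)
    (hF : ∀ y ∈ Set.Ioo a b, IsHKSIntegral f G a y (F y))
    (hA : Filter.Tendsto F (𝓝[<] b) (𝓝 A))
    (hGb' : Filter.Tendsto G (𝓝[<] b) (𝓝 Gb')) :
    IsHKSIntegral f G a b (A + f b * (G b - Gb')) := by
  classical
  intro ε hε
  have hε4 : 0 < ε / 4 := by linarith
  have hfb1 : (0:ℝ) < |f b| + 1 := by positivity
  have hεG : 0 < ε / (4 * (|f b| + 1)) := by positivity
  -- extract thresholds for F and G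
  obtain ⟨βF, hβFb, hβF⟩ : ∃ l ∈ Set.Iio b, ∀ z ∈ Set.Ioo l b, |F z - A| < ε / 4 := by
    have h1 : ∀ᶠ z in 𝓝[<] b, |F z - A| < ε / 4 := by
      have := Metric.tendsto_nhds.mp hA (ε / 4) hε4
      simpa [Real.dist_eq] using this
    rw [eventually_iff, mem_nhdsLT_iff_exists_Ioo_subset] at h1
    obtain ⟨l, hl, hsub⟩ := h1
    exact ⟨l, hl, fun z hz => hsub hz⟩
  obtain ⟨βG, hβGb, hβG⟩ : ∃ l ∈ Set.Iio b, ∀ z ∈ Set.Ioo l b,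
      |G z - Gb'| < ε / (4 * (|f b| + 1)) := by
    have h1 : ∀ᶠ z in 𝓝[<] b, |G z - Gb'| < ε / (4 * (|f b| + 1)) := by
      have := Metric.tendsto_nhds.mp hGb' _ hεG
      simpa [Real.dist_eq] using this
    rw [eventually_iff, mem_nhdsLT_iff_exists_Ioo_subset] at h1
    obtain ⟨l, hl, hsub⟩ := h1
    exact ⟨l, hl, fun z hz => hsub hz⟩
  set β : ℝ := max (max βF βG) ((a + b) / 2) with hβdef
  have hβb : β < b := by
    apply max_lt (max_lt hβFb hβGb); linarith
  have haβ : a < β := lt_of_lt_of_le (by linarith) (le_max_right _ _)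
  -- the sequence of ring boundaries
  set y : ℕ → ℝ := fun k => b - (b - a) / ((k : ℝ) + 1) with hydef
  have hy0 : y 0 = a := by simp [hydef]
  have hymono : StrictMono y := by
    intro k l hkl
    have h1 : (0:ℝ) < (k:ℝ) + 1 := by positivity
    have h2 : ((k:ℝ) + 1) < ((l:ℝ) + 1) := by exact_mod_cast by simpa using hkl
    have := div_lt_div_of_pos_left (show (0:ℝ) < b - a by linarith) h1 h2
    simp only [hydef]
    linarith
  have hyb : ∀ k, y k < b := by
    intro k
    have h1 : (0:ℝ) < (b - a) / ((k:ℝ) + 1) := div_pos (by linarith) (by positivity)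
    simp only [hydef]; linarith
  have hya : ∀ k, a ≤ y k := by
    intro k
    rw [← hy0]
    exact hymono.monotone (Nat.zero_le k)
  have hex : ∀ t, t < b → ∃ k, t < y k := by
    intro t htb
    obtain ⟨n, hn⟩ := exists_nat_gt ((b - a) / (b - t))
    refine ⟨n, ?_⟩
    have hbt : (0:ℝ) < b - t := by linarith
    have h1 : b - a < (b - t) * n := by
      rw [div_lt_iff₀ hbt] at hn; linarith [hn]
    have h2 : (0:ℝ) < (n:ℝ) + 1 := by positivity
    have h3 : (b - a) / ((n:ℝ) + 1) < b - t := by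
      rw [div_lt_iff₀ h2]; nlinarith
    simp only [hydef]
    linarith
  -- ring gauges
  have hDex : ∀ k : ℕ, ∃ δ : ℝ → ℝ, (∀ t, 0 < δ t) ∧
      ∀ c ∈ Set.Icc (y k) (y (k + 1)), ∀ s, Fine f G δ (y k) c s →
        |s - (Hf F a c - Hf F a (y k))| < ε / 2 ^ (k + 3) := by
    intro k
    exact L7 hF (hya k) (hymono (Nat.lt_succ_self k)).le (hyb (k + 1)) (by positivity)
  choose D hDpos hD using hDex
  -- index function
  set K : ℝ → ℕ := fun t => if h : ∃ k, t < y k then Nat.find h else 0 with hKdef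
  have hKspec : ∀ t, a ≤ t → t < b → y (K t - 1) ≤ t ∧ t < y (K t - 1 + 1) := by
    intro t hat htb
    have h := hex t htb
    have hKt : K t = Nat.find h := by simp only [hKdef]; rw [dif_pos h]
    have hfs : t < y (Nat.find h) := Nat.find_spec h
    have hne : Nat.find h ≠ 0 := by
      intro h0
      rw [h0, hy0] at hfs
      exact absurd hfs (not_lt.mpr hat)
    have hsucc : Nat.find h - 1 + 1 = Nat.find h := Nat.succ_pred_eq_of_ne_zero hne
    constructor
    · rw [hKt]
      by_contra hcon
      push_neg at hcon
      exact Nat.find_min h (by omega) hcon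
    · rw [hKt, hsucc]; exact hfs
  have hKval : ∀ t k, y k ≤ t → t < y (k + 1) → K t = k + 1 := by
    intro t k h1 h2
    have h : ∃ j, t < y j := ⟨k + 1, h2⟩
    have hKt : K t = Nat.find h := by simp only [hKdef]; rw [dif_pos h]
    rw [hKt, Nat.find_eq_iff]
    refine ⟨h2, fun j hj => not_lt.mpr ((hymono.monotone (by omega : j ≤ k)).trans h1)⟩
  -- the global gauge
  set δ : ℝ → ℝ := fun t =>
    if t < b then
      (if a ≤ t then
        min (D (K t - 1) t) (min (y (K t - 1 + 1) - t)
          (if t = y (K t - 1) then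
            (if K t - 1 = 0 then (1:ℝ)
             else min (D (K t - 1 - 1) t) (t - y (K t - 1 - 1)))
           else t - y (K t - 1)))
       else 1)
    else if t = b then b - β else 1 with hδdef
  have hδeq : ∀ t, a ≤ t → t < b →
      δ t = min (D (K t - 1) t) (min (y (K t - 1 + 1) - t)
          (if t = y (K t - 1) then
            (if K t - 1 = 0 then (1:ℝ)
             else min (D (K t - 1 - 1) t) (t - y (K t - 1 - 1)))
           else t - y (K t - 1))) := by
    intro t hat htb
    simp only [hδdef]
    rw [if_pos htb, if_pos hat]
  have hδb : δ b = b - β := by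
    simp [hδdef]
  -- the P-facts
  have hP1 : ∀ t, a ≤ t → t < b → δ t ≤ D (K t - 1) t := by
    intro t hat htb; rw [hδeq t hat htb]; exact min_le_left _ _
  have hP2 : ∀ t, a ≤ t → t < b → δ t ≤ y (K t - 1 + 1) - t := by
    intro t hat htb; rw [hδeq t hat htb]
    exact (min_le_right _ _).trans (min_le_left _ _)
  have hP3 : ∀ t, a ≤ t → t < b → y (K t - 1) < t → δ t ≤ t - y (K t - 1) := by
    intro t hat htb hlt; rw [hδeq t hat htb]
    refine (min_le_right _ _).trans ((min_le_right _ _).trans ?_)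
    rw [if_neg (ne_of_gt hlt)]
  have hP4 : ∀ t, a ≤ t → t < b → t = y (K t - 1) → ∀ j, K t - 1 = j + 1 →
      δ t ≤ D j t ∧ δ t ≤ t - y j := by
    intro t hat htb heq j hj
    rw [hδeq t hat htb]
    have h1 : (if t = y (K t - 1) then
            (if K t - 1 = 0 then (1:ℝ)
             else min (D (K t - 1 - 1) t) (t - y (K t - 1 - 1)))
           else t - y (K t - 1)) = min (D j t) (t - y j) := by
      rw [if_pos heq, if_neg (by omega : ¬ K t - 1 = 0),
        (by omega : K t - 1 - 1 = j)]
    rw [h1]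
    constructor
    · exact (min_le_right _ _).trans ((min_le_right _ _).trans (min_le_left _ _))
    · exact (min_le_right _ _).trans ((min_le_right _ _).trans (min_le_right _ _))
  have hδpos : ∀ t, 0 < δ t := by
    intro t
    rcases lt_trichotomy t b with htb | rfl | hbt
    · rcases le_or_gt a t with hat | hta
      · rw [hδeq t hat htb]
        obtain ⟨hk1, hk2⟩ := hKspec t hat htb
        refine lt_min (hDpos _ t) (lt_min (by linarith) ?_)
        by_cases h1 : t = y (K t - 1)
        · rw [if_pos h1]
          by_cases h2 : K t - 1 = 0
          · rw [if_pos h2]; norm_num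
          · rw [if_neg h2]
            refine lt_min (hDpos _ t) ?_
            have h3 : y (K t - 1 - 1) < y (K t - 1) := hymono (by omega)
            rw [← h1] at h3
            linarith
        · rw [if_neg h1]
          have : y (K t - 1) < t := lt_of_le_of_ne hk1 (fun h => h1 h.symm)
          linarith
      · simp only [hδdef]
        rw [if_pos htb, if_neg (not_le.mpr hta)]
        norm_num
    · rw [hδb]; linarith
    · simp only [hδdef]
      rw [if_neg (not_lt.mpr hbt.le), if_neg (ne_of_gt hbt)]
      norm_num
  -- derived gauge properties
  have hQ3 : ∀ t ∈ Set.Icc a b, t < b → t + δ t ≤ b := by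
    intro t ht htb
    have h2 := hP2 t ht.1 htb
    have h3 := hyb (K t - 1 + 1)
    linarith
  have hQ1 : ∀ (j : ℕ) (t : ℝ), a ≤ t → t < b →
      y (j + 1) ∈ Set.Ioo (t - δ t) (t + δ t) → t = y (j + 1) := by
    intro j t hat htb hio
    obtain ⟨hk1, hk2⟩ := hKspec t hat htb
    have hp2 := hP2 t hat htb
    -- j + 1 ≤ K t - 1, else contradiction
    have hle : j + 1 ≤ K t - 1 := by
      by_contra hcon
      have h1 : K t - 1 + 1 ≤ j + 1 := by omega
      have h2 : y (K t - 1 + 1) ≤ y (j + 1) := hymono.monotone h1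
      have := hio.2
      linarith
    by_cases heq : t = y (K t - 1)
    · rcases eq_or_lt_of_le hle with heq2 | hlt2
      · rw [heq, ← heq2]
      · obtain ⟨i, hi⟩ : ∃ i, K t - 1 = i + 1 := ⟨K t - 1 - 1, by omega⟩
        have hp4 := (hP4 t hat htb heq i hi).2
        have h2 : y (j + 1) ≤ y i := hymono.monotone (by omega)
        have := hio.1
        linarith
    · have hyt : y (K t - 1) < t := lt_of_le_of_ne hk1 (fun h => heq h.symm)
      have hp3 := hP3 t hat htb hyt
      have h2 : y (j + 1) ≤ y (K t - 1) := hymono.monotone hle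
      have := hio.1
      linarith
  have hQ2 : ∀ (k : ℕ) (c' : ℝ), c' ≤ y (k + 1) → ∀ t ∈ Set.Icc (y k) c',
      δ t ≤ D k t := by
    intro k c' hc' t ht
    have hat : a ≤ t := (hya k).trans ht.1
    have htc : t ≤ y (k + 1) := ht.2.trans hc'
    have htb : t < b := lt_of_le_of_lt htc (hyb (k + 1))
    rcases lt_or_eq_of_le htc with hlt | heq
    · have hKt : K t = k + 1 := hKval t k ht.1 hlt
      have := hP1 t hat htb
      rwa [hKt, Nat.add_sub_cancel] at this
    · have hKt : K t = k + 2 := by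
        refine hKval t (k + 1) heq.ge ?_
        rw [heq]
        exact hymono (by omega)
      have hKm : K t - 1 = k + 1 := by omega
      have heq2 : t = y (K t - 1) := by rw [hKm, heq]
      exact (hP4 t hat htb heq2 k (by omega)).1
  have hβFle : βF ≤ β := le_trans (le_max_left βF βG) (le_max_left _ _)
  have hβGle : βG ≤ β := le_trans (le_max_right βF βG) (le_max_left _ _)
  -- now the partition argument
  clear hδdef hKdef hδeq hP1 hP2 hP3 hP4 hKval
  clear_value δ K β
  refine ⟨δ, hδpos, ?_⟩
  intro n x t hmono hx0 hxl htag hfine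
  have hfineS : Fine f G δ a b (∑ i : Fin n, f (t i) * (G (x i.succ) - G (x i.castSucc))) := by
    have := Fine.ofFin (f := f) (G := G) (δ := δ) n x t hmono htag hfine
    rwa [hx0, hxl] at this
  obtain ⟨c, s₁, hac, hcb, hcδ, hSsum, hfine1⟩ := hfineS.peel hab hQ3
  rw [hδb] at hcδ
  have hcβ : β < c := by linarith
  have hcab : c ∈ Set.Ioo a b := ⟨lt_trans haβ hcβ, hcb⟩
  -- ring decomposition
  have ring : ∀ j : ℕ, y j ≤ c → ∃ σ, Fine f G δ (y j) c σ ∧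
      |s₁ - σ - Hf F a (y j)| ≤ (1 - (1/2 : ℝ) ^ j) * (ε / 4) := by
    intro j
    induction j with
    | zero =>
      intro _
      refine ⟨s₁, by rwa [hy0], ?_⟩
      simp [Hf, hy0]
    | succ j ih =>
      intro hyc
      have hyc' : y j ≤ c := ((hymono (Nat.lt_succ_self j)).le).trans hyc
      obtain ⟨σ, hσf, hσb⟩ := ih hyc'
      obtain ⟨σ', σ'', hσeq, hσ'f, hσ''f⟩ := hσf.split (y (j + 1))
        ⟨(hymono (Nat.lt_succ_self j)).le, hyc⟩
        (fun r hr hio => hQ1 j r ((hya j).trans hr.1) (lt_of_le_of_lt hr.2 hcb) hio)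
      have hσ'D : Fine f G (D j) (y j) (y (j + 1)) σ' :=
        hσ'f.mono_on (fun r hr => hQ2 j (y (j + 1)) (le_refl _) r hr)
      have hest : |σ' - (Hf F a (y (j + 1)) - Hf F a (y j))| < ε / 2 ^ (j + 3) :=
        hD j (y (j + 1)) ⟨(hymono (Nat.lt_succ_self j)).le, le_refl _⟩ σ' hσ'D
      refine ⟨σ'', hσ''f, ?_⟩
      have key : s₁ - σ'' - Hf F a (y (j + 1)) =
          (s₁ - σ - Hf F a (y j)) + (σ' - (Hf F a (y (j + 1)) - Hf F a (y j))) := by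
        rw [hσeq]; ring
      have hpow : ε / 2 ^ (j + 3) = (1/2 : ℝ) ^ (j + 1) * (ε / 4) := by
        rw [div_pow, one_pow, show j + 3 = (j + 1) + 2 by ring, pow_add,
          div_mul_eq_div_div]
        ring
      have habs : |s₁ - σ'' - Hf F a (y (j + 1))| ≤
          |s₁ - σ - Hf F a (y j)| + |σ' - (Hf F a (y (j + 1)) - Hf F a (y j))| := by
        rw [key]; exact abs_add_le _ _
      have hgoal : (1 - (1/2 : ℝ) ^ j) * (ε / 4) + (1/2 : ℝ) ^ (j + 1) * (ε / 4) =
          (1 - (1/2 : ℝ) ^ (j + 1)) * (ε / 4) := by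
        rw [pow_succ]
        ring
      calc |s₁ - σ'' - Hf F a (y (j + 1))| ≤
          |s₁ - σ - Hf F a (y j)| + |σ' - (Hf F a (y (j + 1)) - Hf F a (y j))| := habs
        _ ≤ (1 - (1/2 : ℝ) ^ j) * (ε / 4) + (1/2 : ℝ) ^ (j + 1) * (ε / 4) := by
            rw [← hpow]; exact add_le_add hσb hest.le
        _ = (1 - (1/2 : ℝ) ^ (j + 1)) * (ε / 4) := hgoal
  -- apply at the last ring
  obtain ⟨hkc1, hkc2⟩ := hKspec c (le_of_lt hcab.1) hcb
  set m := K c - 1 with hmdef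
  obtain ⟨σ, hσf, hσb⟩ := ring m hkc1
  have hσD : Fine f G (D m) (y m) c σ :=
    hσf.mono_on (fun r hr => hQ2 m c hkc2.le r hr)
  have hlast : |σ - (Hf F a c - Hf F a (y m))| < ε / 2 ^ (m + 3) :=
    hD m c ⟨hkc1, hkc2.le⟩ σ hσD
  -- |s₁ - F c| < ε/4
  have hHc : Hf F a c = F c := by
    rw [Hf, if_neg (not_le.mpr hcab.1)]
  have hs1Fc : |s₁ - F c| < ε / 4 := by
    have key : s₁ - F c = (s₁ - σ - Hf F a (y m)) + (σ - (Hf F a c - Hf F a (y m))) := by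
      rw [← hHc]; ring
    have habs : |s₁ - F c| ≤ |s₁ - σ - Hf F a (y m)| + |σ - (Hf F a c - Hf F a (y m))| := by
      rw [key]; exact abs_add_le _ _
    have hp : (0:ℝ) < (1/2 : ℝ) ^ m := by positivity
    have hpow : ε / 2 ^ (m + 3) = (1/2 : ℝ) ^ m * (ε / 8) := by
      rw [div_pow, one_pow, pow_add, div_mul_eq_div_div]
      ring
    have h8 : (1/2 : ℝ) ^ m * (ε / 8) < (1/2 : ℝ) ^ m * (ε / 4) := by
      apply mul_lt_mul_of_pos_left _ hp
      linarith
    nlinarith [hσb, hlast, habs, mul_pos hp hε4]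
  have hFcA : |F c - A| < ε / 4 :=
    hβF c ⟨lt_of_le_of_lt hβFle hcβ, hcb⟩
  have hGc : |G c - Gb'| < ε / (4 * (|f b| + 1)) :=
    hβG c ⟨lt_of_le_of_lt hβGle hcβ, hcb⟩
  have hfbG : |f b * (Gb' - G c)| ≤ ε / 4 := by
    rw [abs_mul]
    have h1 : |Gb' - G c| < ε / (4 * (|f b| + 1)) := by rwa [abs_sub_comm]
    have h2 : |f b| * |Gb' - G c| ≤ |f b| * (ε / (4 * (|f b| + 1))) :=
      mul_le_mul_of_nonneg_left h1.le (abs_nonneg _)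
    have h3 : |f b| * (ε / (4 * (|f b| + 1))) ≤ ε / 4 := aux_fb _ _ (abs_nonneg _) hε
    linarith
  -- final estimate
  have hkey : (∑ i : Fin n, f (t i) * (G (x i.succ) - G (x i.castSucc))) -
      (A + f b * (G b - Gb')) = (s₁ - F c) + (F c - A) + f b * (Gb' - G c) := by
    rw [hSsum]; ring
  rw [hkey]
  calc |(s₁ - F c) + (F c - A) + f b * (Gb' - G c)| ≤
      |(s₁ - F c) + (F c - A)| + |f b * (Gb' - G c)| := abs_add_le _ _
    _ ≤ |s₁ - F c| + |F c - A| + |f b * (Gb' - G c)| := by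
        linarith [abs_add_le (s₁ - F c) (F c - A)]
    _ < ε / 4 + ε / 4 + ε / 4 := by linarith
    _ < ε := by linarith

end Main
end Hake1

/-- Hake's theorem for the Henstock–Kurzweil–Stieltjes integral on a real
interval: if `G` is nondecreasing and right-continuous, `f` is `G`-integrable
on `[a, y]` for every `y ∈ (a, b)` with integral `F y`, and `F y → A` as
`y ↗ b`, then `f` is `G`-integrable on `[a,b]` with integral
`A + f b (G b − G(b⁻))`, where `G(b⁻)` is the left limit of `G` at `b`. -/
theorem stmt16 (a b : ℝ) (hab : a < b) (G f F : ℝ → ℝ)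
    (hG_mono : Monotone G)
    (hG_rc : ∀ x : ℝ, ContinuousWithinAt G (Set.Ici x) x)
    (hF : ∀ y ∈ Set.Ioo a b, IsHKSIntegral f G a y (F y))
    (A Gb' : ℝ)
    (hA : Filter.Tendsto F (𝓝[<] b) (𝓝 A))
    (hGb' : Filter.Tendsto G (𝓝[<] b) (𝓝 Gb')) :
    IsHKSIntegral f G a b (A + f b * (G b - Gb')) := by
  exact Hake1.main hab hF hA hGb'
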